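/- Let M : L²(ℝ³; ℂ) →L[ℂ] L²(ℝ³; ℂ) be a compact continuous linear operator. Then for every ε > 0 there exists r > 0 such that for every f ∈ L²(ℝ³; ℂ) that vanishes almost everywhere outside the closed ball of radius r centered at the origin, one has ‖M f‖ ≤ ε ‖f‖. -/

import Mathlib

open MeasureTheory Filter Metric
open scoped InnerProductSpace ENNReal Topology

set_option maxHeartbeats 1000000

lemma aux_tendsto_eLpNorm_indicator
    (w : Lp ℂ 2 (volume : Measure (EuclideanSpace ℝ (Fin 3)))) :
    Tendsto (fun n : ℕ =>
      eLpNorm ((Metric.closedBall (0 : EuclideanSpace ℝ (Fin 3)) (1/(n+1))).indicator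
        (w : EuclideanSpace ℝ (Fin 3) → ℂ)) 2 volume) atTop (𝓝 0) := by
  set ν : Measure (EuclideanSpace ℝ (Fin 3)) :=
    (volume : Measure (EuclideanSpace ℝ (Fin 3))).withDensity
      (fun x => (‖w x‖₊ : ℝ≥0∞) ^ (2:ℝ)) with hν
  have hfin : ν Set.univ < ∞ := by
    rw [hν, withDensity_apply _ MeasurableSet.univ, Measure.restrict_univ]
    exact lintegral_rpow_enorm_lt_top_of_eLpNorm_lt_top (by norm_num) (by norm_num)
      (Lp.eLpNorm_lt_top w)
  have hanti : Antitone (fun n : ℕ =>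
      Metric.closedBall (0 : EuclideanSpace ℝ (Fin 3)) (1/(n+1))) := by
    intro m n hmn
    apply Metric.closedBall_subset_closedBall
    have h1 : (0:ℝ) < m + 1 := by positivity
    have : (m:ℝ) + 1 ≤ (n:ℝ) + 1 := by exact_mod_cast add_le_add_left (Nat.cast_le.mpr hmn) 1
    exact one_div_le_one_div_of_le h1 this
  have hInter : (⋂ n : ℕ, Metric.closedBall (0 : EuclideanSpace ℝ (Fin 3)) (1/(n+1)))
      ⊆ {0} := by
    intro x hx
    simp only [Set.mem_iInter, Metric.mem_closedBall, dist_zero_right] at hx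
    have : ‖x‖ ≤ 0 :=
      ge_of_tendsto' tendsto_one_div_add_atTop_nhds_zero_nat (fun n => hx n)
    simpa using le_antisymm this (norm_nonneg x)
  have hν0 : ν (⋂ n : ℕ, Metric.closedBall (0 : EuclideanSpace ℝ (Fin 3)) (1/(n+1))) = 0 := by
    refine measure_mono_null hInter ?_
    exact (withDensity_absolutelyContinuous _ _) (measure_singleton _)
  have htend : Tendsto
      (fun n : ℕ => ν (Metric.closedBall (0 : EuclideanSpace ℝ (Fin 3)) (1/(n+1))))
      atTop (𝓝 0) := by
    have := tendsto_measure_iInter_atTop (μ := ν)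
      (fun n : ℕ => measurableSet_closedBall.nullMeasurableSet) hanti
      ⟨0, (lt_of_le_of_lt (measure_mono (Set.subset_univ _)) hfin).ne⟩
    rwa [hν0] at this
  have key : ∀ n : ℕ,
      eLpNorm ((Metric.closedBall (0 : EuclideanSpace ℝ (Fin 3)) (1/(n+1))).indicator
        (w : EuclideanSpace ℝ (Fin 3) → ℂ)) 2 volume
      = (ν (Metric.closedBall (0 : EuclideanSpace ℝ (Fin 3)) (1/(n+1)))) ^ (1/2 : ℝ) := by
    intro n
    rw [eLpNorm_indicator_eq_eLpNorm_restrict measurableSet_closedBall,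
      eLpNorm_eq_lintegral_rpow_enorm_toReal (by norm_num) (by norm_num), hν,
      withDensity_apply _ measurableSet_closedBall]
    norm_num
    rfl
  simp only [key]
  have hcont : Tendsto (fun x : ℝ≥0∞ => x ^ (1/2:ℝ)) (𝓝 0) (𝓝 ((0:ℝ≥0∞) ^ (1/2:ℝ))) :=
    ENNReal.continuous_rpow_const.tendsto 0
  have := hcont.comp htend
  rw [ENNReal.zero_rpow_of_pos (by norm_num)] at this
  exact this

theorem compact_operator_small_on_small_balls
    (M : Lp ℂ 2 (volume : Measure (EuclideanSpace ℝ (Fin 3))) →L[ℂ]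
         Lp ℂ 2 (volume : Measure (EuclideanSpace ℝ (Fin 3))))
    (hM : IsCompactOperator M) :
    ∀ ε > (0 : ℝ), ∃ r > (0 : ℝ),
      ∀ f : Lp ℂ 2 (volume : Measure (EuclideanSpace ℝ (Fin 3))),
        (∀ᵐ x ∂(volume : Measure (EuclideanSpace ℝ (Fin 3))),
          x ∉ Metric.closedBall (0 : EuclideanSpace ℝ (Fin 3)) r → f x = 0) →
        ‖M f‖ ≤ ε * ‖f‖ := by
  intro ε hε
  by_contra hcon
  push_neg at hcon
  choose f hfsupp hflt using fun n : ℕ => hcon (1/(n+1)) (by positivity)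
  have hfne : ∀ n, f n ≠ 0 := by
    intro n h
    have := hflt n
    rw [h] at this
    simp at this
  have hfpos : ∀ n, (0:ℝ) < ‖f n‖ := fun n => norm_pos_iff.mpr (hfne n)
  set g : ℕ → Lp ℂ 2 (volume : Measure (EuclideanSpace ℝ (Fin 3))) :=
    fun n => ((‖f n‖ : ℂ))⁻¹ • f n with hg
  have hgnorm : ∀ n, ‖g n‖ = 1 := by
    intro n
    rw [hg]
    simp only [norm_smul, norm_inv, Complex.norm_real, Real.norm_eq_abs, abs_norm]
    exact inv_mul_cancel₀ (norm_ne_zero_iff.mpr (hfne n))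
  have hMg : ∀ n, ε < ‖M (g n)‖ := by
    intro n
    have h1 : M (g n) = ((‖f n‖ : ℂ))⁻¹ • M (f n) := by rw [hg]; simp
    rw [h1, norm_smul, norm_inv, Complex.norm_real, Real.norm_eq_abs, abs_norm]
    rw [lt_inv_mul_iff₀ (hfpos n), mul_comm]
    exact hflt n
  have hgsupp : ∀ n : ℕ, ∀ᵐ x ∂(volume : Measure (EuclideanSpace ℝ (Fin 3))),
      x ∉ Metric.closedBall (0 : EuclideanSpace ℝ (Fin 3)) (1/(n+1)) → g n x = 0 := by
    intro n
    filter_upwards [hfsupp n, Lp.coeFn_smul ((‖f n‖ : ℂ))⁻¹ (f n)] with x hx hx2 hmem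
    rw [hg]
    simp only
    rw [hx2, Pi.smul_apply, hx hmem, smul_zero]
  -- weak convergence to zero
  have hweak : ∀ w : Lp ℂ 2 (volume : Measure (EuclideanSpace ℝ (Fin 3))),
      Tendsto (fun n => ⟪w, g n⟫_ℂ) atTop (𝓝 0) := by
    intro w
    have hmem : ∀ n : ℕ,
        MemLp ((Metric.closedBall (0 : EuclideanSpace ℝ (Fin 3)) (1/(n+1))).indicator
          (w : EuclideanSpace ℝ (Fin 3) → ℂ)) 2 volume :=
      fun n => (Lp.memLp w).indicator measurableSet_closedBall
    set u : ℕ → Lp ℂ 2 (volume : Measure (EuclideanSpace ℝ (Fin 3))) :=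
      fun n => (hmem n).toLp _ with hu
    have hinner : ∀ n, ⟪w, g n⟫_ℂ = ⟪u n, g n⟫_ℂ := by
      intro n
      rw [MeasureTheory.L2.inner_def, MeasureTheory.L2.inner_def]
      apply integral_congr_ae
      filter_upwards [(hmem n).coeFn_toLp, hgsupp n] with x hx hx2
      by_cases hxB : x ∈ Metric.closedBall (0 : EuclideanSpace ℝ (Fin 3)) (1/(n+1))
      · simp only [hu]
        rw [hx, Set.indicator_of_mem hxB]
      · rw [hx2 hxB]
        simp
    have hbound : ∀ n, ‖⟪w, g n⟫_ℂ‖ ≤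
        (eLpNorm ((Metric.closedBall (0 : EuclideanSpace ℝ (Fin 3)) (1/(n+1))).indicator
          (w : EuclideanSpace ℝ (Fin 3) → ℂ)) 2 volume).toReal := by
      intro n
      rw [hinner n]
      calc ‖⟪u n, g n⟫_ℂ‖ ≤ ‖u n‖ * ‖g n‖ := norm_inner_le_norm _ _
        _ = ‖u n‖ := by rw [hgnorm n, mul_one]
        _ = _ := Lp.norm_toLp _ _
    apply squeeze_zero_norm hbound
    have := (ENNReal.tendsto_toReal (a := 0) (by simp)).comp (aux_tendsto_eLpNorm_indicator w)
    exact this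
  -- compactness: extract convergent subsequence
  have hbdd : Bornology.IsBounded (Set.range g) := by
    apply (Metric.isBounded_closedBall
      (x := (0 : Lp ℂ 2 (volume : Measure (EuclideanSpace ℝ (Fin 3))))) (r := 1)).subset
    rintro _ ⟨n, rfl⟩
    simp [Metric.mem_closedBall, hgnorm n]
  have hK : IsCompact (closure (M '' Set.range g)) :=
    hM.isCompact_closure_image_of_bounded (f := M.toLinearMap) hbdd
  obtain ⟨y, -, φ, hφ, hconv⟩ := hK.tendsto_subseq
    (x := fun n => M (g n)) (fun n => subset_closure ⟨g n, ⟨n, rfl⟩, rfl⟩)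
  have hynorm : ε ≤ ‖y‖ :=
    ge_of_tendsto hconv.norm (Eventually.of_forall fun k => (hMg (φ k)).le)
  have hy0 : y = 0 := by
    rw [← inner_self_eq_zero (𝕜 := ℂ)]
    have h1 : Tendsto (fun k => ⟪y, M (g (φ k))⟫_ℂ) atTop (𝓝 ⟪y, y⟫_ℂ) :=
      tendsto_const_nhds.inner hconv
    have h2 : Tendsto (fun k => ⟪y, M (g (φ k))⟫_ℂ) atTop (𝓝 0) := by
      have heq : (fun k => ⟪y, M (g (φ k))⟫_ℂ)
          = fun k => ⟪(ContinuousLinearMap.adjoint M) y, g (φ k)⟫_ℂ := by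
        funext k
        rw [ContinuousLinearMap.adjoint_inner_left]
      rw [heq]
      exact (hweak _).comp hφ.tendsto_atTop
    exact tendsto_nhds_unique h1 h2
  rw [hy0, norm_zero] at hynorm
  linarith
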